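/- Let H and A be Hopf quasigroups over a field F whose antipodes λ_H and λ_A are bijective, and let Ψ : H⊗A → A⊗H be a comonoidal distributive law of H over A. Then the linear map φ_A = (A⊗ε_H)∘Ψ : H⊗A → A makes A a left H-module comonoid. -/
import Mathlib


open TensorProduct LinearMap

noncomputable section

universe u

/-- A Hopf quasigroup structure on an `F`-module `H`. -/
structure HopfQG (F : Type u) [Field F] (H : Type u) [AddCommGroup H] [Module F H] where
  eta : F →ₗ[F] H
  mu : H ⊗[F] H →ₗ[F] H
  eps : H →ₗ[F] F
  delta : H →ₗ[F] H ⊗[F] H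
  lam : H →ₗ[F] H
  mul_one : mu ∘ₗ lTensor H eta ∘ₗ (TensorProduct.rid F H).symm.toLinearMap = LinearMap.id
  one_mul : mu ∘ₗ rTensor H eta ∘ₗ (TensorProduct.lid F H).symm.toLinearMap = LinearMap.id
  counit_left : (TensorProduct.lid F H).toLinearMap ∘ₗ rTensor H eps ∘ₗ delta = LinearMap.id
  counit_right : (TensorProduct.rid F H).toLinearMap ∘ₗ lTensor H eps ∘ₗ delta = LinearMap.id
  coassoc : (TensorProduct.assoc F H H H).toLinearMap ∘ₗ rTensor H delta ∘ₗ delta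
      = lTensor H delta ∘ₗ delta
  eps_eta : eps ∘ₗ eta = LinearMap.id
  eps_mu : eps ∘ₗ mu = (TensorProduct.lid F F).toLinearMap ∘ₗ TensorProduct.map eps eps
  delta_eta : delta ∘ₗ eta
      = TensorProduct.map eta eta ∘ₗ (TensorProduct.lid F F).symm.toLinearMap
  delta_mu : delta ∘ₗ mu
      = TensorProduct.map mu mu ∘ₗ (TensorProduct.tensorTensorTensorComm F H H H H).toLinearMap
          ∘ₗ TensorProduct.map delta delta
  antipode_l1 : mu ∘ₗ TensorProduct.map lam mu ∘ₗ (TensorProduct.assoc F H H H).toLinearMap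
        ∘ₗ rTensor H delta
      = (TensorProduct.lid F H).toLinearMap ∘ₗ rTensor H eps
  antipode_l2 : mu ∘ₗ lTensor H mu ∘ₗ lTensor H (rTensor H lam)
        ∘ₗ (TensorProduct.assoc F H H H).toLinearMap ∘ₗ rTensor H delta
      = (TensorProduct.lid F H).toLinearMap ∘ₗ rTensor H eps
  antipode_r1 : mu ∘ₗ rTensor H mu ∘ₗ (TensorProduct.assoc F H H H).symm.toLinearMap
        ∘ₗ lTensor H (rTensor H lam) ∘ₗ lTensor H delta
      = (TensorProduct.rid F H).toLinearMap ∘ₗ lTensor H eps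
  antipode_r2 : mu ∘ₗ TensorProduct.map mu lam ∘ₗ (TensorProduct.assoc F H H H).symm.toLinearMap
        ∘ₗ lTensor H delta
      = (TensorProduct.rid F H).toLinearMap ∘ₗ lTensor H eps

section QGDefs

variable (F : Type u) [Field F]
variable {H : Type u} [AddCommGroup H] [Module F H]
variable {A : Type u} [AddCommGroup A] [Module F A]
variable {X : Type u} [AddCommGroup X] [Module F X]

/-- The tensor-product coproduct `δ_{H⊗A} = (H⊗c_{H,A}⊗A)∘(δ_H⊗δ_A)`. -/
def tensorDelta (dH : H →ₗ[F] H ⊗[F] H) (dA : A →ₗ[F] A ⊗[F] A) :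
    H ⊗[F] A →ₗ[F] (H ⊗[F] A) ⊗[F] (H ⊗[F] A) :=
  (TensorProduct.tensorTensorTensorComm F H H A A).toLinearMap ∘ₗ TensorProduct.map dH dA

/-- The tensor-product counit `ε_H⊗ε_A`. -/
def tensorEps (eH : H →ₗ[F] F) (eA : A →ₗ[F] F) : H ⊗[F] A →ₗ[F] F :=
  (TensorProduct.lid F F).toLinearMap ∘ₗ TensorProduct.map eH eA

/-- The tensor-product unit `η_H⊗η_A`. -/
def tensorEta (uH : F →ₗ[F] H) (uA : F →ₗ[F] A) : F →ₗ[F] H ⊗[F] A :=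
  TensorProduct.map uH uA ∘ₗ (TensorProduct.lid F F).symm.toLinearMap

/-- The tensor-product multiplication `(μ_H⊗μ_A)∘(H⊗c_{A,H}⊗A)`. -/
def tensorMu (mH : H ⊗[F] H →ₗ[F] H) (mA : A ⊗[F] A →ₗ[F] A) :
    (H ⊗[F] A) ⊗[F] (H ⊗[F] A) →ₗ[F] H ⊗[F] A :=
  TensorProduct.map mH mA ∘ₗ (TensorProduct.tensorTensorTensorComm F H A H A).toLinearMap

/-- `Ψ : H⊗A → A⊗H` is a distributive law of the Hopf quasigroup `H` over `A`. -/
def IsDistLaw (QH : HopfQG F H) (QA : HopfQG F A) (Ψ : H ⊗[F] A →ₗ[F] A ⊗[F] H) : Prop :=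
  (Ψ ∘ₗ lTensor H QA.mu ∘ₗ TensorProduct.map QH.lam (rTensor A QA.lam)
      = rTensor H QA.mu ∘ₗ (TensorProduct.assoc F A A H).symm.toLinearMap
        ∘ₗ lTensor A Ψ ∘ₗ (TensorProduct.assoc F A H A).toLinearMap
        ∘ₗ rTensor A Ψ ∘ₗ (TensorProduct.assoc F H A A).symm.toLinearMap
        ∘ₗ TensorProduct.map QH.lam (rTensor A QA.lam))
  ∧ (Ψ ∘ₗ rTensor A QH.mu ∘ₗ TensorProduct.map (lTensor H QH.lam) QA.lam
      = lTensor A QH.mu ∘ₗ (TensorProduct.assoc F A H H).toLinearMap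
        ∘ₗ rTensor H Ψ ∘ₗ (TensorProduct.assoc F H A H).symm.toLinearMap
        ∘ₗ lTensor H Ψ ∘ₗ (TensorProduct.assoc F H H A).toLinearMap
        ∘ₗ TensorProduct.map (lTensor H QH.lam) QA.lam)
  ∧ (Ψ ∘ₗ lTensor H QA.eta ∘ₗ (TensorProduct.rid F H).symm.toLinearMap
      = rTensor H QA.eta ∘ₗ (TensorProduct.lid F H).symm.toLinearMap)
  ∧ (Ψ ∘ₗ rTensor A QH.eta ∘ₗ (TensorProduct.lid F A).symm.toLinearMap
      = lTensor A QH.eta ∘ₗ (TensorProduct.rid F A).symm.toLinearMap)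

/-- `Ψ` is a comonoidal distributive law of `H` over `A`. -/
def IsComonoidalDL (QH : HopfQG F H) (QA : HopfQG F A) (Ψ : H ⊗[F] A →ₗ[F] A ⊗[F] H) : Prop :=
  IsDistLaw F QH QA Ψ
  ∧ (tensorDelta F QA.delta QH.delta ∘ₗ Ψ
      = TensorProduct.map Ψ Ψ ∘ₗ tensorDelta F QH.delta QA.delta)
  ∧ (tensorEps F QA.eps QH.eps ∘ₗ Ψ = tensorEps F QH.eps QA.eps)

/-- `Ψ` is an a-comonoidal distributive law of `H` over `A`. -/
def IsAComonoidalDL (QH : HopfQG F H) (QA : HopfQG F A) (Ψ : H ⊗[F] A →ₗ[F] A ⊗[F] H) : Prop :=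
  IsComonoidalDL F QH QA Ψ
  ∧ (lTensor A QH.mu ∘ₗ (TensorProduct.assoc F A H H).toLinearMap
        ∘ₗ TensorProduct.map Ψ QH.mu
        ∘ₗ (TensorProduct.assoc F H A (H ⊗[F] H)).symm.toLinearMap
        ∘ₗ lTensor H (TensorProduct.assoc F A H H).toLinearMap
        ∘ₗ lTensor H (rTensor H Ψ)
        ∘ₗ lTensor H (TensorProduct.assoc F H A H).symm.toLinearMap
        ∘ₗ (TensorProduct.assoc F H H (A ⊗[F] H)).toLinearMap
        ∘ₗ rTensor (A ⊗[F] H) (rTensor H QH.lam ∘ₗ QH.delta)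
      = (TensorProduct.lid F (A ⊗[F] H)).toLinearMap ∘ₗ rTensor (A ⊗[F] H) QH.eps)
  ∧ (lTensor A QH.mu ∘ₗ (TensorProduct.assoc F A H H).toLinearMap
        ∘ₗ TensorProduct.map Ψ QH.mu
        ∘ₗ (TensorProduct.assoc F H A (H ⊗[F] H)).symm.toLinearMap
        ∘ₗ lTensor H (TensorProduct.assoc F A H H).toLinearMap
        ∘ₗ lTensor H (rTensor H Ψ)
        ∘ₗ lTensor H (TensorProduct.assoc F H A H).symm.toLinearMap
        ∘ₗ (TensorProduct.assoc F H H (A ⊗[F] H)).toLinearMap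
        ∘ₗ rTensor (A ⊗[F] H) (lTensor H QH.lam ∘ₗ QH.delta)
      = (TensorProduct.lid F (A ⊗[F] H)).toLinearMap ∘ₗ rTensor (A ⊗[F] H) QH.eps)
  ∧ (rTensor H QA.mu ∘ₗ (TensorProduct.assoc F A A H).symm.toLinearMap
        ∘ₗ TensorProduct.map QA.mu Ψ
        ∘ₗ (TensorProduct.assoc F A A (H ⊗[F] A)).symm.toLinearMap
        ∘ₗ lTensor A (TensorProduct.assoc F A H A).toLinearMap
        ∘ₗ lTensor A (rTensor A Ψ)
        ∘ₗ lTensor A (TensorProduct.assoc F H A A).symm.toLinearMap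
        ∘ₗ (TensorProduct.assoc F A H (A ⊗[F] A)).toLinearMap
        ∘ₗ lTensor (A ⊗[F] H) (rTensor A QA.lam ∘ₗ QA.delta)
      = (TensorProduct.rid F (A ⊗[F] H)).toLinearMap ∘ₗ lTensor (A ⊗[F] H) QA.eps)
  ∧ (rTensor H QA.mu ∘ₗ (TensorProduct.assoc F A A H).symm.toLinearMap
        ∘ₗ TensorProduct.map QA.mu Ψ
        ∘ₗ (TensorProduct.assoc F A A (H ⊗[F] A)).symm.toLinearMap
        ∘ₗ lTensor A (TensorProduct.assoc F A H A).toLinearMap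
        ∘ₗ lTensor A (rTensor A Ψ)
        ∘ₗ lTensor A (TensorProduct.assoc F H A A).symm.toLinearMap
        ∘ₗ (TensorProduct.assoc F A H (A ⊗[F] A)).toLinearMap
        ∘ₗ lTensor (A ⊗[F] H) (lTensor A QA.lam ∘ₗ QA.delta)
      = (TensorProduct.rid F (A ⊗[F] H)).toLinearMap ∘ₗ lTensor (A ⊗[F] H) QA.eps)

/-- The wreath product multiplication `(μ_A⊗μ_H)∘(A⊗Ψ⊗H)` on `A⊗H`. -/
def wreathMul (QA : HopfQG F A) (QH : HopfQG F H) (Ψ : H ⊗[F] A →ₗ[F] A ⊗[F] H) :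
    (A ⊗[F] H) ⊗[F] (A ⊗[F] H) →ₗ[F] A ⊗[F] H :=
  TensorProduct.map QA.mu QH.mu ∘ₗ (TensorProduct.assoc F A A (H ⊗[F] H)).symm.toLinearMap
    ∘ₗ lTensor A ((TensorProduct.assoc F A H H).toLinearMap ∘ₗ rTensor H Ψ
        ∘ₗ (TensorProduct.assoc F H A H).symm.toLinearMap)
    ∘ₗ (TensorProduct.assoc F A H (A ⊗[F] H)).toLinearMap

/-- The wreath product antipode `Ψ∘(λ_H⊗λ_A)∘c_{A,H}`. -/
def wreathLam (QA : HopfQG F A) (QH : HopfQG F H) (Ψ : H ⊗[F] A →ₗ[F] A ⊗[F] H) :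
    A ⊗[F] H →ₗ[F] A ⊗[F] H :=
  Ψ ∘ₗ TensorProduct.map QH.lam QA.lam ∘ₗ (TensorProduct.comm F A H).toLinearMap

/-- `f` is a morphism of Hopf quasigroups. -/
def IsHopfQGMor (Q1 : HopfQG F H) (Q2 : HopfQG F X) (f : H →ₗ[F] X) : Prop :=
  f ∘ₗ Q1.eta = Q2.eta
  ∧ f ∘ₗ Q1.mu = Q2.mu ∘ₗ TensorProduct.map f f
  ∧ Q2.eps ∘ₗ f = Q1.eps
  ∧ TensorProduct.map f f ∘ₗ Q1.delta = Q2.delta ∘ₗ f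

/-- `ω_X = μ_X∘(i_A⊗i_H)`. -/
def omegaMap (QX : HopfQG F X) (iA : A →ₗ[F] X) (iH : H →ₗ[F] X) : A ⊗[F] H →ₗ[F] X :=
  QX.mu ∘ₗ TensorProduct.map iA iH

/-- `θ_X = μ_X∘(i_H⊗i_A)`. -/
def thetaMap (QX : HopfQG F X) (iH : H →ₗ[F] X) (iA : A →ₗ[F] X) : H ⊗[F] A →ₗ[F] X :=
  QX.mu ∘ₗ TensorProduct.map iH iA

/-- `X` factorizes as `X = AH`. -/
def Factorizes (QX : HopfQG F X) (QH : HopfQG F H) (QA : HopfQG F A)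
    (iH : H →ₗ[F] X) (iA : A →ₗ[F] X) : Prop :=
  Function.Bijective (omegaMap F QX iA iH)
  ∧ (QX.mu ∘ₗ rTensor X (omegaMap F QX iA iH)
      = QX.mu ∘ₗ TensorProduct.map iA (QX.mu ∘ₗ rTensor X iH)
          ∘ₗ (TensorProduct.assoc F A H X).toLinearMap)
  ∧ (QX.mu ∘ₗ lTensor X (omegaMap F QX iA iH)
      = QX.mu ∘ₗ TensorProduct.map (QX.mu ∘ₗ lTensor X iA) iH
          ∘ₗ (TensorProduct.assoc F X A H).symm.toLinearMap)
  ∧ (QX.mu ∘ₗ rTensor X (thetaMap F QX iH iA ∘ₗ TensorProduct.map QH.lam QA.lam)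
      = QX.mu ∘ₗ TensorProduct.map (iH ∘ₗ QH.lam) (QX.mu ∘ₗ rTensor X (iA ∘ₗ QA.lam))
          ∘ₗ (TensorProduct.assoc F H A X).toLinearMap)
  ∧ (QX.mu ∘ₗ lTensor X (thetaMap F QX iH iA ∘ₗ TensorProduct.map QH.lam QA.lam)
      = QX.mu ∘ₗ TensorProduct.map (QX.mu ∘ₗ lTensor X (iH ∘ₗ QH.lam)) (iA ∘ₗ QA.lam)
          ∘ₗ (TensorProduct.assoc F X H A).symm.toLinearMap)

end QGDefs

section MPDefs

variable (F : Type u) [Field F]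
variable {H : Type u} [AddCommGroup H] [Module F H]
variable {A : Type u} [AddCommGroup A] [Module F A]

/-- `(A,φA)` is a left `H`-module comonoid. -/
def IsLeftModuleComonoid (QH : HopfQG F H) (QA : HopfQG F A) (φA : H ⊗[F] A →ₗ[F] A) : Prop :=
  (φA ∘ₗ rTensor A QH.eta ∘ₗ (TensorProduct.lid F A).symm.toLinearMap = LinearMap.id)
  ∧ (φA ∘ₗ lTensor H φA ∘ₗ (TensorProduct.assoc F H H A).toLinearMap = φA ∘ₗ rTensor A QH.mu)
  ∧ (QA.eps ∘ₗ φA = tensorEps F QH.eps QA.eps)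
  ∧ (QA.delta ∘ₗ φA
      = TensorProduct.map φA φA ∘ₗ (TensorProduct.tensorTensorTensorComm F H H A A).toLinearMap
          ∘ₗ TensorProduct.map QH.delta QA.delta)

/-- `(H,φH)` is a right `A`-module comonoid. -/
def IsRightModuleComonoid (QH : HopfQG F H) (QA : HopfQG F A) (φH : H ⊗[F] A →ₗ[F] H) : Prop :=
  (φH ∘ₗ lTensor H QA.eta ∘ₗ (TensorProduct.rid F H).symm.toLinearMap = LinearMap.id)
  ∧ (φH ∘ₗ rTensor A φH ∘ₗ (TensorProduct.assoc F H A A).symm.toLinearMap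
      = φH ∘ₗ lTensor H QA.mu)
  ∧ (QH.eps ∘ₗ φH = tensorEps F QH.eps QA.eps)
  ∧ (QH.delta ∘ₗ φH
      = TensorProduct.map φH φH ∘ₗ (TensorProduct.tensorTensorTensorComm F H H A A).toLinearMap
          ∘ₗ TensorProduct.map QH.delta QA.delta)

/-- The map `Ψ = (φ_A⊗φ_H)∘(H⊗c_{H,A}⊗A)∘(δ_H⊗δ_A)` associated to a pair of actions. -/
def mpPsi (QA : HopfQG F A) (QH : HopfQG F H)
    (φA : H ⊗[F] A →ₗ[F] A) (φH : H ⊗[F] A →ₗ[F] H) : H ⊗[F] A →ₗ[F] A ⊗[F] H :=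
  TensorProduct.map φA φH ∘ₗ (TensorProduct.tensorTensorTensorComm F H H A A).toLinearMap
    ∘ₗ TensorProduct.map QH.delta QA.delta

/-- `(A,H)` is a matched pair of Hopf quasigroups with actions `φA`, `φH`. -/
def IsMatchedPair (QA : HopfQG F A) (QH : HopfQG F H)
    (φA : H ⊗[F] A →ₗ[F] A) (φH : H ⊗[F] A →ₗ[F] H) : Prop :=
  IsLeftModuleComonoid F QH QA φA
  ∧ IsRightModuleComonoid F QH QA φH
  -- (d1) φ_A∘(H⊗η_A) = ε_H⊗η_A
  ∧ (φA ∘ₗ lTensor H QA.eta ∘ₗ (TensorProduct.rid F H).symm.toLinearMap = QA.eta ∘ₗ QH.eps)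
  -- (d2) φ_H∘(η_H⊗A) = η_H⊗ε_A
  ∧ (φH ∘ₗ rTensor A QH.eta ∘ₗ (TensorProduct.lid F A).symm.toLinearMap = QH.eta ∘ₗ QA.eps)
  -- (d3) (φ_H⊗φ_A)∘δ_{H⊗A} = c_{A,H}∘Ψ
  ∧ (TensorProduct.map φH φA ∘ₗ (TensorProduct.tensorTensorTensorComm F H H A A).toLinearMap
        ∘ₗ TensorProduct.map QH.delta QA.delta
      = (TensorProduct.comm F A H).toLinearMap ∘ₗ mpPsi F QA QH φA φH)
  -- (d4)
  ∧ (φA ∘ₗ lTensor H QA.mu ∘ₗ TensorProduct.map QH.lam (rTensor A QA.lam)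
      = QA.mu ∘ₗ lTensor A φA ∘ₗ (TensorProduct.assoc F A H A).toLinearMap
          ∘ₗ rTensor A (mpPsi F QA QH φA φH ∘ₗ TensorProduct.map QH.lam QA.lam)
          ∘ₗ (TensorProduct.assoc F H A A).symm.toLinearMap)
  -- (d5)
  ∧ (QH.mu ∘ₗ TensorProduct.map φH QH.mu
        ∘ₗ (TensorProduct.assoc F H A (H ⊗[F] H)).symm.toLinearMap
        ∘ₗ lTensor H (TensorProduct.assoc F A H H).toLinearMap
        ∘ₗ TensorProduct.map QH.lam (rTensor H (mpPsi F QA QH φA φH))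
        ∘ₗ lTensor H (TensorProduct.assoc F H A H).symm.toLinearMap
        ∘ₗ (TensorProduct.assoc F H H (A ⊗[F] H)).toLinearMap
        ∘ₗ rTensor (A ⊗[F] H) QH.delta
      = (TensorProduct.lid F H).toLinearMap
          ∘ₗ rTensor H (tensorEps F QH.eps QA.eps)
          ∘ₗ (TensorProduct.assoc F H A H).symm.toLinearMap)
  -- (d6)
  ∧ (QH.mu ∘ₗ TensorProduct.map φH QH.mu
        ∘ₗ (TensorProduct.assoc F H A (H ⊗[F] H)).symm.toLinearMap
        ∘ₗ lTensor H (TensorProduct.assoc F A H H).toLinearMap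
        ∘ₗ lTensor H (rTensor H (mpPsi F QA QH φA φH))
        ∘ₗ lTensor H (TensorProduct.assoc F H A H).symm.toLinearMap
        ∘ₗ (TensorProduct.assoc F H H (A ⊗[F] H)).toLinearMap
        ∘ₗ rTensor (A ⊗[F] H) (lTensor H QH.lam ∘ₗ QH.delta)
      = (TensorProduct.lid F H).toLinearMap
          ∘ₗ rTensor H (tensorEps F QH.eps QA.eps)
          ∘ₗ (TensorProduct.assoc F H A H).symm.toLinearMap)
  -- (d7)
  ∧ (φH ∘ₗ rTensor A QH.mu ∘ₗ TensorProduct.map (lTensor H QH.lam) QA.lam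
      = QH.mu ∘ₗ rTensor H φH ∘ₗ (TensorProduct.assoc F H A H).symm.toLinearMap
          ∘ₗ lTensor H (mpPsi F QA QH φA φH ∘ₗ TensorProduct.map QH.lam QA.lam)
          ∘ₗ (TensorProduct.assoc F H H A).toLinearMap)
  -- (d8)
  ∧ (QA.mu ∘ₗ TensorProduct.map QA.mu φA
        ∘ₗ (TensorProduct.assoc F A A (H ⊗[F] A)).symm.toLinearMap
        ∘ₗ lTensor A (TensorProduct.assoc F A H A).toLinearMap
        ∘ₗ lTensor A (TensorProduct.map (mpPsi F QA QH φA φH) QA.lam)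
        ∘ₗ lTensor A (TensorProduct.assoc F H A A).symm.toLinearMap
        ∘ₗ (TensorProduct.assoc F A H (A ⊗[F] A)).toLinearMap
        ∘ₗ lTensor (A ⊗[F] H) QA.delta
      = (TensorProduct.rid F A).toLinearMap
          ∘ₗ lTensor A (tensorEps F QH.eps QA.eps)
          ∘ₗ (TensorProduct.assoc F A H A).toLinearMap)
  -- (d9)
  ∧ (QA.mu ∘ₗ TensorProduct.map QA.mu φA
        ∘ₗ (TensorProduct.assoc F A A (H ⊗[F] A)).symm.toLinearMap
        ∘ₗ lTensor A (TensorProduct.assoc F A H A).toLinearMap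
        ∘ₗ lTensor A (rTensor A (mpPsi F QA QH φA φH))
        ∘ₗ lTensor A (TensorProduct.assoc F H A A).symm.toLinearMap
        ∘ₗ (TensorProduct.assoc F A H (A ⊗[F] A)).toLinearMap
        ∘ₗ lTensor (A ⊗[F] H) (rTensor A QA.lam ∘ₗ QA.delta)
      = (TensorProduct.rid F A).toLinearMap
          ∘ₗ lTensor A (tensorEps F QH.eps QA.eps)
          ∘ₗ (TensorProduct.assoc F A H A).toLinearMap)

end MPDefs

/-- for a comonoidal distributive law `Ψ` of `H` over `A` (with bijective
antipodes), `φ_A = (A⊗ε_H)∘Ψ` makes `A` a left `H`-module comonoid. -/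
theorem stmt4_phiA_left_module_comonoid
    {F : Type u} [Field F] {H A : Type u}
    [AddCommGroup H] [Module F H] [AddCommGroup A] [Module F A]
    (QH : HopfQG F H) (QA : HopfQG F A)
    (hlamH : Function.Bijective QH.lam) (hlamA : Function.Bijective QA.lam)
    (Ψ : H ⊗[F] A →ₗ[F] A ⊗[F] H) (hΨ : IsComonoidalDL F QH QA Ψ) :
    IsLeftModuleComonoid F QH QA
      ((TensorProduct.rid F A).toLinearMap ∘ₗ lTensor A QH.eps ∘ₗ Ψ) := by
  obtain ⟨⟨hd1, hd2, hd3, hd4⟩, hcd, hce⟩ := hΨ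
  set ρ : A ⊗[F] H →ₗ[F] A := (TensorProduct.rid F A).toLinearMap ∘ₗ lTensor A QH.eps with hρ
  -- elementwise facts
  have heta : QH.eps (QH.eta 1) = 1 := by
    have := LinearMap.congr_fun QH.eps_eta (1 : F); simpa using this
  have hmu : ∀ x y : H, QH.eps (QH.mu (x ⊗ₜ y)) = QH.eps x * QH.eps y := by
    intro x y
    have := LinearMap.congr_fun QH.eps_mu (x ⊗ₜ[F] y)
    simpa [smul_eq_mul] using this
  have hrho : ∀ (a : A) (h : H), ρ (a ⊗ₜ h) = QH.eps h • a := by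
    intro a h; simp [hρ]
  have hee : ∀ h : H,
      (TensorProduct.lid F F) (TensorProduct.map QH.eps QH.eps (QH.delta h)) = QH.eps h := by
    intro h
    have haux : (TensorProduct.lid F F).toLinearMap ∘ₗ TensorProduct.map QH.eps QH.eps
        = QH.eps ∘ₗ (TensorProduct.lid F H).toLinearMap ∘ₗ rTensor H QH.eps := by
      apply TensorProduct.ext'
      intro x y
      simp [smul_eq_mul]
    have h1 := LinearMap.congr_fun haux (QH.delta h)
    have h2 := LinearMap.congr_fun QH.counit_left h
    simp only [LinearMap.comp_apply, LinearEquiv.coe_coe, LinearMap.id_apply] at h1 h2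
    rw [h1, h2]
  refine ⟨?_, ?_, ?_, ?_⟩
  · -- unit
    apply LinearMap.ext; intro a
    have h4 := LinearMap.congr_fun hd4 a
    simp only [LinearMap.comp_apply, LinearEquiv.coe_coe, TensorProduct.lid_symm_apply,
      TensorProduct.rid_symm_apply, rTensor_tmul, lTensor_tmul, LinearMap.id_apply] at h4 ⊢
    rw [h4]
    simp [heta]
  · -- associativity of the action
    have hsurj : Function.Surjective (TensorProduct.map (lTensor H QH.lam) QA.lam) :=
      TensorProduct.map_surjective (LinearMap.lTensor_surjective H hlamH.2) hlamA.2
    have hE : ∀ z : (H ⊗[F] H) ⊗[F] A,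
        Ψ (rTensor A QH.mu z)
          = lTensor A QH.mu ((TensorProduct.assoc F A H H)
              (rTensor H Ψ ((TensorProduct.assoc F H A H).symm
                (lTensor H Ψ ((TensorProduct.assoc F H H A) z))))) := by
      intro z
      obtain ⟨w, rfl⟩ := hsurj z
      have := LinearMap.congr_fun hd2 w
      simpa only [LinearMap.comp_apply, LinearEquiv.coe_coe] using this
    have hstep1 : ∀ (s : A ⊗[F] H) (h' : H),
        ρ (lTensor A QH.mu ((TensorProduct.assoc F A H H) (s ⊗ₜ h')))
          = QH.eps h' • ρ s := by
      intro s h'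
      induction s using TensorProduct.induction_on with
      | zero => simp
      | tmul a' h'' =>
          simp [hrho, hmu, smul_smul, mul_comm]
      | add x y hx hy =>
          simp only [TensorProduct.add_tmul, map_add, hx, hy, smul_add]
    have hstep2 : ∀ (h1 : H) (t : A ⊗[F] H),
        ρ (lTensor A QH.mu ((TensorProduct.assoc F A H H)
            (rTensor H Ψ ((TensorProduct.assoc F H A H).symm (h1 ⊗ₜ t)))))
          = ρ (Ψ (h1 ⊗ₜ ρ t)) := by
      intro h1 t
      induction t using TensorProduct.induction_on with
      | zero => simp [TensorProduct.tmul_zero]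
      | tmul a h' =>
          have := hstep1 (Ψ (h1 ⊗ₜ a)) h'
          simp only [TensorProduct.assoc_symm_tmul, rTensor_tmul] at *
          rw [this]
          simp [hrho, TensorProduct.tmul_smul]
      | add x y hx hy =>
          simp only [TensorProduct.tmul_add, map_add, hx, hy]
    apply TensorProduct.ext_threefold
    intro h1 h2 a
    have hEz := hE ((h1 ⊗ₜ h2) ⊗ₜ a)
    have h3 := hstep2 h1 (Ψ (h2 ⊗ₜ a))
    simp only [hρ, LinearMap.comp_apply, LinearEquiv.coe_coe, TensorProduct.assoc_tmul,
      lTensor_tmul, rTensor_tmul] at hEz h3 ⊢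
    rw [hEz]
    exact h3.symm
  · -- counit
    have haux : QA.eps ∘ₗ ρ
        = (TensorProduct.lid F F).toLinearMap ∘ₗ TensorProduct.map QA.eps QH.eps := by
      apply TensorProduct.ext'
      intro a h
      simp [hρ, smul_eq_mul, mul_comm]
    apply TensorProduct.ext'
    intro h a
    have h1 := LinearMap.congr_fun haux (Ψ (h ⊗ₜ a))
    have h2 := LinearMap.congr_fun hce (h ⊗ₜ[F] a)
    simp only [hρ, tensorEps, LinearMap.comp_apply, LinearEquiv.coe_coe] at h1 h2 ⊢
    rw [h1, h2]
  · -- comultiplicativity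
    have haux2 : TensorProduct.map ρ ρ
          ∘ₗ (TensorProduct.tensorTensorTensorComm F A A H H).toLinearMap
        = (TensorProduct.rid F (A ⊗[F] A)).toLinearMap
            ∘ₗ lTensor (A ⊗[F] A)
                ((TensorProduct.lid F F).toLinearMap ∘ₗ TensorProduct.map QH.eps QH.eps) := by
      apply TensorProduct.ext_fourfold'
      intro a1 a2 x y
      simp [hρ, TensorProduct.tensorTensorTensorComm_tmul, smul_eq_mul,
        TensorProduct.smul_tmul', TensorProduct.tmul_smul, smul_smul, mul_comm]
    have haux : QA.delta ∘ₗ ρ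
        = TensorProduct.map ρ ρ ∘ₗ tensorDelta F QA.delta QH.delta := by
      apply TensorProduct.ext'
      intro a h
      have h1 := LinearMap.congr_fun haux2 (QA.delta a ⊗ₜ[F] QH.delta h)
      simp only [hρ, tensorDelta, LinearMap.comp_apply, LinearEquiv.coe_coe,
        TensorProduct.map_tmul, lTensor_tmul] at h1 ⊢
      rw [h1]
      simp [hρ, hee]
    apply TensorProduct.ext'
    intro h a
    have h1 := LinearMap.congr_fun haux (Ψ (h ⊗ₜ a))
    have h2 := LinearMap.congr_fun hcd (h ⊗ₜ[F] a)
    simp only [hρ, tensorDelta, LinearMap.comp_apply, LinearEquiv.coe_coe,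
      TensorProduct.map_tmul] at h1 h2 ⊢
    rw [h1, h2]
    generalize (TensorProduct.tensorTensorTensorComm F H H A A)
        (QH.delta h ⊗ₜ[F] QA.delta a) = X
    induction X using TensorProduct.induction_on with
    | zero => simp
    | tmul u v => simp
    | add x y hx hy => simp only [map_add, hx, hy]
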